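/- Let p(t_k|θ), t_k ∈ T_k, θ ∈ Θ ⊆ ℝ, be probability densities, let p and π* be continuous strictly positive functions on Θ with proper formal posteriors, and assume π* is posterior-consistent: for every θ ∈ Θ and ε > 0, P*({τ : |τ−θ| ≤ ε} | t_k) = ∫_{|τ−θ|≤ε} π*(τ|t_k) dτ → 1 in p(·|θ)-probability as k → ∞. Let Θ_0 ⊂ Θ be compact and θ an interior point of Θ_0. Then the ratio of restricted posteriors converges to one in probability: π*_0(θ|t_k)/p_0(θ|t_k) → 1 in p(·|θ)-probability as k → ∞, where π*_0(·|t_k) and p_0(·|t_k) are the posteriors on Θ_0 from the normalized restrictions of π* and p to Θ_0. -/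

import Mathlib

open MeasureTheory Filter


set_option maxHeartbeats 1000000 in
private lemma stmt14_arith (δ c η δ' M a b B u v πθ qθ : ℝ)
    (hδ : 0 < δ) (hc : 0 < c) (hη : 0 < η)
    (hηle : η ≤ c * δ / 4) (hηle1 : η ≤ c / 4) (hMc : c ≤ M)
    (hδ'pos : 0 < δ') (hδ'half : δ' ≤ 1 / 2) (hδ'δ : δ' ≤ δ / 4)
    (hδ'M : 8 * M * δ' ≤ c * δ)
    (hBpos : 0 < B) (hab : a ≤ b) (hbB : b ≤ B) (haB : (1 - δ') * B ≤ a)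
    (hulow : (c - η) * a ≤ u) (huhigh : u ≤ (c + η) * a)
    (htail : v - u ≤ M * (b - a)) (htail0 : 0 ≤ v - u)
    (hπθ : 0 < πθ) (hqc : qθ = c * πθ) :
    |πθ * v / (qθ * b) - 1| ≤ δ := by
  have hMpos : 0 < M := lt_of_lt_of_le hc hMc
  have hcη : 0 < c - η := by linarith
  have hapos : 0 < a := lt_of_lt_of_le (mul_pos (by linarith) hBpos) haB
  have hbpos : 0 < b := lt_of_lt_of_le hapos hab
  have huv : u ≤ v := by linarith
  have hvpos : 0 < v := lt_of_lt_of_le (mul_pos hcη hapos) (hulow.trans huv)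
  have hcδ' : c * δ' ≤ c * δ / 4 := by nlinarith
  have hbamax : b - a ≤ 2 * δ' * a := by
    have h1 : B - a ≤ δ' * B := by linarith
    have h2 : B ≤ 2 * a := by nlinarith
    nlinarith
  have h1δb : (1 - δ') * b ≤ a := by nlinarith
  have hcoef : (1 - δ) * c ≤ (c - η) * (1 - δ') := by nlinarith
  have hdenpos : 0 < qθ * b := by rw [hqc]; positivity
  have hlow : (1 - δ) * (qθ * b) ≤ πθ * v := by
    rw [hqc]
    have hv1 : (c - η) * ((1 - δ') * b) ≤ v :=
      le_trans (mul_le_mul_of_nonneg_left h1δb hcη.le) (hulow.trans huv)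
    nlinarith [mul_le_mul_of_nonneg_left hv1 hπθ.le,
      mul_le_mul_of_nonneg_left (mul_le_mul_of_nonneg_right hcoef hbpos.le) hπθ.le]
  have hhigh : πθ * v ≤ (1 + δ) * (qθ * b) := by
    rw [hqc]
    have hv2 : v ≤ (c + η) * a + 2 * M * δ' * a := by
      nlinarith [mul_le_mul_of_nonneg_left hbamax hMpos.le]
    have hv3 : v ≤ (c + c * δ / 2) * a := by
      nlinarith [mul_le_mul_of_nonneg_right hηle hapos.le,
        mul_le_mul_of_nonneg_right (show 2 * M * δ' ≤ c * δ / 4 by linarith) hapos.le]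
    have hvb : v ≤ (c + c * δ / 2) * b := by
      nlinarith [mul_le_mul_of_nonneg_left hab (by positivity : (0:ℝ) ≤ c + c * δ / 2)]
    nlinarith [mul_le_mul_of_nonneg_left hvb hπθ.le,
      mul_nonneg (mul_nonneg hc.le hδ.le) (mul_nonneg hπθ.le hbpos.le)]
  rw [abs_le]
  constructor
  · have : 1 - δ ≤ πθ * v / (qθ * b) := (le_div_iff₀ hdenpos).mpr hlow
    linarith
  · have : πθ * v / (qθ * b) ≤ 1 + δ := (div_le_iff₀ hdenpos).mpr hhigh
    linarith

set_option maxHeartbeats 2000000 in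
/-- Step 2 of the proof of Theorem 7: If `π*` is
posterior-consistent, then at any interior point `θ` of a compact `Θ0` the
ratio of the restricted posteriors from `π*` and from any `p ∈ P_s` converges
to one in `p(·|θ)`-probability. -/
theorem stmt_14
    (Θ : Set ℝ) (hΘ : MeasurableSet Θ)
    (T : ℕ → Type*) [∀ k, MeasurableSpace (T k)] (ν : ∀ k, Measure (T k))
    (p : ∀ k, T k → ℝ → ℝ)
    (hmeas : ∀ k, Measurable (Function.uncurry (p k)))
    (hnonneg : ∀ k t θ, 0 ≤ p k t θ)
    (hdens : ∀ k, ∀ θ ∈ Θ, ∫ t, p k t θ ∂ν k = 1)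
    (q : ℝ → ℝ) (hq_cont : ContinuousOn q Θ) (hq_pos : ∀ θ ∈ Θ, 0 < q θ)
    (hq_proper : ∀ k, ∀ t : T k,
      IntegrableOn (fun θ => p k t θ * q θ) Θ ∧ 0 < ∫ θ in Θ, p k t θ * q θ)
    (πs : ℝ → ℝ) (hπs_cont : ContinuousOn πs Θ) (hπs_pos : ∀ θ ∈ Θ, 0 < πs θ)
    (hπs_proper : ∀ k, ∀ t : T k,
      IntegrableOn (fun θ => p k t θ * πs θ) Θ ∧ 0 < ∫ θ in Θ, p k t θ * πs θ)
    -- posterior consistency of π*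
    (hπs_cons : ∀ θ ∈ Θ, ∀ ε > (0 : ℝ), ∀ δ > (0 : ℝ),
      Tendsto
        (fun k =>
          ∫ t in {t : T k |
              δ < |(∫ τ in Θ ∩ Set.Icc (θ - ε) (θ + ε), p k t τ * πs τ) /
                  (∫ τ in Θ, p k t τ * πs τ) - 1|},
            p k t θ ∂ν k)
        atTop (nhds 0))
    (Θ0 : Set ℝ) (hΘ0 : IsCompact Θ0) (hΘ0sub : Θ0 ⊆ Θ)
    (θ : ℝ) (hθ : θ ∈ interior Θ0) :
    ∀ δ > (0 : ℝ),
      Tendsto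
        (fun k =>
          ∫ t in {t : T k |
              δ < |(p k t θ * πs θ / (∫ τ in Θ0, p k t τ * πs τ)) /
                  (p k t θ * q θ / (∫ τ in Θ0, p k t τ * q τ)) - 1|},
            p k t θ ∂ν k)
        atTop (nhds 0) := by
  intro δ hδ
  have hθ0 : θ ∈ Θ0 := interior_subset hθ
  have hθΘ : θ ∈ Θ := hΘ0sub hθ0
  have hΘ0meas : MeasurableSet Θ0 := hΘ0.isClosed.measurableSet
  have hπθ : 0 < πs θ := hπs_pos θ hθΘ
  have hqθ : 0 < q θ := hq_pos θ hθΘ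
  set c : ℝ := q θ / πs θ with hc
  have hcpos : 0 < c := div_pos hqθ hπθ
  have hmin1 : 0 < min δ 1 := lt_min hδ one_pos
  set η : ℝ := c * min δ 1 / 4 with hηdef
  have hηpos : 0 < η := by positivity
  have hηle : η ≤ c * δ / 4 := by
    have : min δ 1 ≤ δ := min_le_left _ _
    have := mul_le_mul_of_nonneg_left this hcpos.le
    simp only [hηdef]; linarith
  have hηle1 : η ≤ c / 4 := by
    have : min δ 1 ≤ 1 := min_le_right _ _
    have := mul_le_mul_of_nonneg_left this hcpos.le
    simp only [hηdef]; linarith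
  -- the supremum M of q/πs on Θ0
  have hfcont : ContinuousOn (fun τ => q τ / πs τ) Θ0 :=
    (hq_cont.mono hΘ0sub).div (hπs_cont.mono hΘ0sub)
      (fun τ hτ => (hπs_pos τ (hΘ0sub hτ)).ne')
  obtain ⟨τ0, hτ0, hM⟩ := hΘ0.exists_isMaxOn ⟨θ, hθ0⟩ hfcont
  set M : ℝ := q τ0 / πs τ0 with hMdef
  have hMc : c ≤ M := hM hθ0
  have hMpos : 0 < M := lt_of_lt_of_le hcpos hMc
  have hMq : ∀ τ ∈ Θ0, q τ ≤ M * πs τ := by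
    intro τ hτ
    have h1 : q τ / πs τ ≤ M := hM hτ
    have hπτ := hπs_pos τ (hΘ0sub hτ)
    have : q τ / πs τ * πs τ ≤ M * πs τ := mul_le_mul_of_nonneg_right h1 hπτ.le
    rwa [div_mul_cancel₀ _ hπτ.ne'] at this
  set δ' : ℝ := min (1 / 2) (min (δ / 4) (c * δ / (8 * M))) with hδ'def
  have hδ'pos : 0 < δ' := lt_min (by norm_num) (lt_min (by linarith) (by positivity))
  have hδ'half : δ' ≤ 1 / 2 := min_le_left _ _
  have hδ'δ : δ' ≤ δ / 4 := (min_le_right _ _).trans (min_le_left _ _)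
  have hδ'M : 8 * M * δ' ≤ c * δ := by
    have h1 : δ' ≤ c * δ / (8 * M) := (min_le_right _ _).trans (min_le_right _ _)
    have h2 := mul_le_mul_of_nonneg_left h1 (by positivity : (0:ℝ) ≤ 8 * M)
    rw [mul_div_cancel₀ _ (by positivity : (8:ℝ) * M ≠ 0)] at h2
    linarith
  -- choose ε
  obtain ⟨ρ, hρpos, hball⟩ := Metric.isOpen_iff.mp isOpen_interior θ hθ
  have hcw : ContinuousWithinAt (fun τ => q τ / πs τ) Θ θ :=
    (hq_cont.div hπs_cont (fun τ hτ => (hπs_pos τ hτ).ne')) θ hθΘ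
  obtain ⟨r, hrpos, hr⟩ := Metric.continuousWithinAt_iff.mp hcw η hηpos
  set ε : ℝ := min ρ r / 2 with hεdef
  have hεpos : 0 < ε := by positivity
  have hερ : ε < ρ := by
    have : min ρ r ≤ ρ := min_le_left _ _
    simp only [hεdef]; linarith
  have hεr : ε < r := by
    have : min ρ r ≤ r := min_le_right _ _
    simp only [hεdef]; linarith
  have hIccΘ0 : Set.Icc (θ - ε) (θ + ε) ⊆ Θ0 := by
    rw [← Real.closedBall_eq_Icc]
    exact (Metric.closedBall_subset_ball hερ).trans (hball.trans interior_subset)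
  have hIccΘ : Set.Icc (θ - ε) (θ + ε) ⊆ Θ := hIccΘ0.trans hΘ0sub
  have hclose : ∀ τ ∈ Set.Icc (θ - ε) (θ + ε),
      (c - η) * πs τ ≤ q τ ∧ q τ ≤ (c + η) * πs τ := by
    intro τ hτ
    have hτΘ : τ ∈ Θ := hIccΘ hτ
    have hd : dist τ θ < r := by
      rw [Real.dist_eq]
      have h1 := hτ.1; have h2 := hτ.2
      have : |τ - θ| ≤ ε := abs_le.mpr ⟨by linarith, by linarith⟩
      linarith
    have hcl := hr hτΘ hd
    rw [Real.dist_eq] at hcl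
    have hπτ := hπs_pos τ hτΘ
    have h1 := (abs_lt.mp hcl).1
    have h2 := (abs_lt.mp hcl).2
    constructor
    · have h3 : c - η ≤ q τ / πs τ := by linarith
      have := mul_le_mul_of_nonneg_right h3 hπτ.le
      rwa [div_mul_cancel₀ _ hπτ.ne'] at this
    · have h3 : q τ / πs τ ≤ c + η := by linarith
      have := mul_le_mul_of_nonneg_right h3 hπτ.le
      rwa [div_mul_cancel₀ _ hπτ.ne'] at this
  -- instantiate consistency
  have hIccInter : Θ ∩ Set.Icc (θ - ε) (θ + ε) = Set.Icc (θ - ε) (θ + ε) :=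
    Set.inter_eq_right.mpr hIccΘ
  have hcons := hπs_cons θ hθΘ ε hεpos δ' hδ'pos
  rw [hIccInter] at hcons
  refine tendsto_of_tendsto_of_tendsto_of_le_of_le (g := fun _ => (0:ℝ))
    tendsto_const_nhds hcons
    (fun k => integral_nonneg fun t => hnonneg k t θ) (fun k => ?_)
  -- per-k comparison
  set A : Set (T k) := {t | δ' <
      |(∫ τ in Set.Icc (θ - ε) (θ + ε), p k t τ * πs τ) /
        (∫ τ in Θ, p k t τ * πs τ) - 1|} with hA
  set Z : Set (T k) := {t | p k t θ = 0} with hZ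
  have hfmeas : Measurable (fun t : T k => p k t θ) :=
    (hmeas k).comp (measurable_id.prodMk measurable_const)
  have hfint : Integrable (fun t : T k => p k t θ) (ν k) := by
    by_contra hcontra
    have h1 := hdens k θ hθΘ
    rw [integral_undef hcontra] at h1
    norm_num at h1
  have hZmeas : MeasurableSet Z := hfmeas (measurableSet_singleton 0)
  -- the key pointwise containment
  have hsub : {t : T k |
      δ < |(p k t θ * πs θ / (∫ τ in Θ0, p k t τ * πs τ)) /
          (p k t θ * q θ / (∫ τ in Θ0, p k t τ * q τ)) - 1|} ⊆ A ∪ Z := by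
    intro t ht
    simp only [Set.mem_setOf_eq] at ht
    by_contra hcon
    rw [Set.mem_union] at hcon
    push_neg at hcon
    obtain ⟨hAt, hZt⟩ := hcon
    simp only [hA, Set.mem_setOf_eq, not_lt] at hAt
    simp only [hZ, Set.mem_setOf_eq] at hZt
    have hptpos : 0 < p k t θ := lt_of_le_of_ne (hnonneg k t θ) (Ne.symm hZt)
    set a := ∫ τ in Set.Icc (θ - ε) (θ + ε), p k t τ * πs τ with ha
    set b := ∫ τ in Θ0, p k t τ * πs τ with hb
    set B := ∫ τ in Θ, p k t τ * πs τ with hB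
    set u := ∫ τ in Set.Icc (θ - ε) (θ + ε), p k t τ * q τ with hu
    set v := ∫ τ in Θ0, p k t τ * q τ with hv
    have hiπ := (hπs_proper k t).1
    have hiq := (hq_proper k t).1
    have hBpos := (hπs_proper k t).2
    have hiπ0 : IntegrableOn (fun τ => p k t τ * πs τ) Θ0 := hiπ.mono_set hΘ0sub
    have hiπI : IntegrableOn (fun τ => p k t τ * πs τ) (Set.Icc (θ - ε) (θ + ε)) :=
      hiπ0.mono_set hIccΘ0
    have hiq0 : IntegrableOn (fun τ => p k t τ * q τ) Θ0 := hiq.mono_set hΘ0sub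
    have hiqI : IntegrableOn (fun τ => p k t τ * q τ) (Set.Icc (θ - ε) (θ + ε)) :=
      hiq0.mono_set hIccΘ0
    have hπnn0 : (0 : ℝ → ℝ) ≤ᵐ[(volume : Measure ℝ).restrict Θ0]
        fun τ => p k t τ * πs τ := by
      rw [EventuallyLE, ae_restrict_iff' hΘ0meas]
      exact ae_of_all _ fun τ hτ =>
        mul_nonneg (hnonneg k t τ) (hπs_pos τ (hΘ0sub hτ)).le
    have hπnnΘ : (0 : ℝ → ℝ) ≤ᵐ[(volume : Measure ℝ).restrict Θ]
        fun τ => p k t τ * πs τ := by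
      rw [EventuallyLE, ae_restrict_iff' hΘ]
      exact ae_of_all _ fun τ hτ => mul_nonneg (hnonneg k t τ) (hπs_pos τ hτ).le
    have hab : a ≤ b :=
      setIntegral_mono_set hiπ0 hπnn0 (HasSubset.Subset.eventuallyLE hIccΘ0)
    have hbB : b ≤ B :=
      setIntegral_mono_set hiπ hπnnΘ (HasSubset.Subset.eventuallyLE hΘ0sub)
    have habs := abs_le.mp hAt
    have haB : (1 - δ') * B ≤ a := by
      have h1 : 1 - δ' ≤ a / B := by linarith [habs.1]
      have h2 := mul_le_mul_of_nonneg_right h1 hBpos.le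
      rwa [div_mul_cancel₀ _ hBpos.ne'] at h2
    have hapos : 0 < a := lt_of_lt_of_le (mul_pos (by linarith) hBpos) haB
    have hbpos : 0 < b := lt_of_lt_of_le hapos hab
    have hulow : (c - η) * a ≤ u := by
      have h1 : ∫ τ in Set.Icc (θ - ε) (θ + ε), (c - η) * (p k t τ * πs τ) ≤
          ∫ τ in Set.Icc (θ - ε) (θ + ε), p k t τ * q τ :=
        setIntegral_mono_on (hiπI.const_mul _) hiqI measurableSet_Icc
          (fun τ hτ => by
            have h := (hclose τ hτ).1
            have hp := hnonneg k t τ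
            have hπτ := (hπs_pos τ (hIccΘ hτ)).le
            nlinarith)
      calc (c - η) * a
          = ∫ τ in Set.Icc (θ - ε) (θ + ε), (c - η) * (p k t τ * πs τ) :=
            (integral_const_mul _ _).symm
        _ ≤ u := h1
    have huhigh : u ≤ (c + η) * a := by
      have h1 : ∫ τ in Set.Icc (θ - ε) (θ + ε), p k t τ * q τ ≤
          ∫ τ in Set.Icc (θ - ε) (θ + ε), (c + η) * (p k t τ * πs τ) :=
        setIntegral_mono_on hiqI (hiπI.const_mul _) measurableSet_Icc
          (fun τ hτ => by
            have h := (hclose τ hτ).2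
            have hp := hnonneg k t τ
            have hπτ := (hπs_pos τ (hIccΘ hτ)).le
            nlinarith)
      calc u ≤ ∫ τ in Set.Icc (θ - ε) (θ + ε), (c + η) * (p k t τ * πs τ) := h1
        _ = (c + η) * a := integral_const_mul _ _
    have hvsplit : ∫ τ in Θ0 \ Set.Icc (θ - ε) (θ + ε), p k t τ * q τ = v - u :=
      integral_diff measurableSet_Icc hiq0 hIccΘ0
    have hπsplit : ∫ τ in Θ0 \ Set.Icc (θ - ε) (θ + ε), p k t τ * πs τ = b - a :=
      integral_diff measurableSet_Icc hiπ0 hIccΘ0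
    have htail : v - u ≤ M * (b - a) := by
      rw [← hvsplit, ← hπsplit, ← integral_const_mul]
      exact setIntegral_mono_on (hiq0.mono_set Set.diff_subset)
        ((hiπ0.mono_set Set.diff_subset).const_mul _)
        (hΘ0meas.diff measurableSet_Icc)
        (fun τ hτ => by
          have h := hMq τ hτ.1
          have hp := hnonneg k t τ
          nlinarith)
    have htail0 : 0 ≤ v - u := by
      rw [← hvsplit]
      exact setIntegral_nonneg (hΘ0meas.diff measurableSet_Icc)
        (fun τ hτ => mul_nonneg (hnonneg k t τ) (hq_pos τ (hΘ0sub hτ.1)).le)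
    have hqc : q θ = c * πs θ := by
      rw [hc]; field_simp
    have hrw : (p k t θ * πs θ / b) / (p k t θ * q θ / v) = πs θ * v / (q θ * b) := by
      have hcη : 0 < c - η := by linarith
      have hapos : 0 < a := lt_of_lt_of_le (mul_pos (by linarith) hBpos) haB
      have hbpos : 0 < b := lt_of_lt_of_le hapos hab
      have huv : u ≤ v := by linarith
      have hvpos : 0 < v := lt_of_lt_of_le (mul_pos hcη hapos) (hulow.trans huv)
      field_simp
    rw [hrw] at ht
    have habs2 : |πs θ * v / (q θ * b) - 1| ≤ δ :=
      stmt14_arith δ c η δ' M a b B u v (πs θ) (q θ) hδ hcpos hηpos hηle hηle1 hMc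
        hδ'pos hδ'half hδ'δ hδ'M hBpos hab hbB haB hulow huhigh htail htail0 hπθ hqc
    linarith [ht, habs2]
  -- integral comparison
  have hZint : ∫ t in Z, p k t θ ∂ν k = 0 := by
    rw [setIntegral_congr_fun hZmeas (fun t ht => ht)]
    simp
  calc ∫ t in {t : T k |
        δ < |(p k t θ * πs θ / (∫ τ in Θ0, p k t τ * πs τ)) /
            (p k t θ * q θ / (∫ τ in Θ0, p k t τ * q τ)) - 1|}, p k t θ ∂ν k
      ≤ ∫ t in A ∪ Z, p k t θ ∂ν k :=
        setIntegral_mono_set hfint.integrableOn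
          (ae_of_all _ fun t => hnonneg k t θ)
          (HasSubset.Subset.eventuallyLE hsub)
    _ ≤ ∫ t, p k t θ ∂((ν k).restrict A + (ν k).restrict Z) :=
        integral_mono_measure (Measure.restrict_union_le _ _)
          (ae_of_all _ fun t => hnonneg k t θ)
          (Integrable.add_measure (μ := (ν k).restrict A) (ν := (ν k).restrict Z)
            hfint.integrableOn hfint.integrableOn)
    _ = (∫ t in A, p k t θ ∂ν k) + ∫ t in Z, p k t θ ∂ν k :=
        integral_add_measure hfint.integrableOn hfint.integrableOn
    _ = ∫ t in A, p k t θ ∂ν k := by rw [hZint, add_zero]
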